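/- Every alternating bilinear map f: Λ²ℂⁿ → ℂⁿ is a Lie algebra 2-coboundary for the abelian Lie algebra ℂⁿ with coefficients in the adjoint module e_n^ℂ = o(n,ℂ) ⋉ ℂⁿ; that is, there exists a linear map l: ℂⁿ → o(n,ℂ) ⊂ e_n^ℂ such that f(v, w) = [l(v), w] + [v, l(w)] for all v, w ∈ ℂⁿ. -/

import Mathlib

open Matrix

/-!
STATEMENT 3: Every alternating bilinear map `f : Λ²ℂⁿ → ℂⁿ` is a Lie algebra
2-coboundary for the abelian Lie algebra `ℂⁿ` with coefficients in the adjoint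
module `e_n^ℂ = o(n,ℂ) ⋉ ℂⁿ`.

Elements of `o(n,ℂ)` are antisymmetric `n × n` matrices, acting on the ideal
`ℂⁿ` via the structure constants `[l_{ij}, e_k] = δ_{ik} e_j − δ_{jk} e_i`;
in coordinates the adjoint action of the coefficient matrix `M` on `w ∈ ℂⁿ`
is `[M, w] = −M.mulVec w`.  Hence the coboundary of a linear map
`l : ℂⁿ → o(n,ℂ)` is `dl(v,w) = [l(v), w] + [v, l(w)]
= (l w).mulVec v − (l v).mulVec w`.
-/

/-- Every alternating bilinear map `f : Λ²ℂⁿ → ℂⁿ` is a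
2-coboundary: there is a linear map `l : ℂⁿ → o(n,ℂ)` with
`f(v, w) = [l(v), w] + [v, l(w)]` for all `v, w`. -/
theorem alternating_to_Cn_is_coboundary (n : ℕ) (hn : 3 ≤ n)
    (f : (Fin n → ℂ) →ₗ[ℂ] (Fin n → ℂ) →ₗ[ℂ] (Fin n → ℂ))
    (hf : ∀ v, f v v = 0) :
    ∃ l : (Fin n → ℂ) →ₗ[ℂ] Matrix (Fin n) (Fin n) ℂ,
      (∀ v, (l v)ᵀ = -(l v)) ∧
      ∀ v w, f v w = (l w).mulVec v - (l v).mulVec w := by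
  set e : Fin n → (Fin n → ℂ) := fun i => Pi.single i 1 with he
  -- pointwise antisymmetry of f
  have hanti : ∀ v w (k : Fin n), f v w k = - f w v k := by
    intro v w k
    have h := hf (v + w)
    simp only [map_add, LinearMap.add_apply, hf v, hf w, add_zero, zero_add] at h
    have h' := congrFun h k
    simp only [Pi.add_apply, Pi.zero_apply] at h'
    linear_combination h'
  -- representation of a vector in the standard basis
  have hrep : ∀ u : Fin n → ℂ, u = ∑ i, u i • e i := by
    intro u
    funext j
    simp [he, Pi.single_apply, Finset.sum_ite_eq', mul_comm]
  -- expansion of f in the first argument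
  have hexp1 : ∀ (u w : Fin n → ℂ) (k : Fin n),
      f u w k = ∑ i, u i * f (e i) w k := by
    intro u w k
    conv_lhs => rw [hrep u]
    rw [map_sum]
    simp [LinearMap.sum_apply]
  -- expansion of f in the second argument
  have hexp2 : ∀ (u w : Fin n → ℂ) (k : Fin n),
      f u w k = ∑ i, w i * f u (e i) k := by
    intro u w k
    conv_lhs => rw [hrep w]
    rw [map_sum]
    simp
  refine ⟨⟨⟨fun v => Matrix.of (fun b c =>
      (1/2 : ℂ) * (f (e c) v b + f v (e b) c -
        Finset.univ.sum (fun a => f (e b) (e c) a * v a))), ?_⟩, ?_⟩, ?_, ?_⟩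
  · intro v w
    ext b c
    simp only [Matrix.of_apply, map_add, LinearMap.add_apply, Pi.add_apply,
      Matrix.add_apply, mul_add, Finset.sum_add_distrib]
    ring
  · intro a v
    ext b c
    simp only [Matrix.of_apply, Matrix.smul_apply, smul_eq_mul, RingHom.id_apply,
      LinearMapClass.map_smul, LinearMap.smul_apply, Pi.smul_apply]
    rw [show (∑ x, f (e b) (e c) x * (a * v x)) = a * ∑ x, f (e b) (e c) x * v x by
      rw [Finset.mul_sum]
      exact Finset.sum_congr rfl fun x _ => by ring]
    ring
  · intro v
    ext b c
    simp only [Matrix.transpose_apply, Matrix.neg_apply, LinearMap.coe_mk,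
      AddHom.coe_mk, Matrix.of_apply]
    rw [hanti (e b) v c, hanti v (e c) b,
      show (∑ a, f (e c) (e b) a * v a) = -∑ a, f (e b) (e c) a * v a by
        rw [← Finset.sum_neg_distrib]
        exact Finset.sum_congr rfl fun a _ => by rw [hanti (e c) (e b) a]; ring]
    ring
  · intro v w
    funext k
    simp only [LinearMap.coe_mk, AddHom.coe_mk, Pi.sub_apply]
    rw [Matrix.mulVec, Matrix.mulVec]
    simp only [dotProduct, Matrix.of_apply]
    -- key expansion of the coboundary sum
    have E : ∀ (u z : Fin n → ℂ),
        (∑ i, (1/2 : ℂ) * (f (e i) z k + f z (e k) i - ∑ a, f (e k) (e i) a * z a) * u i)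
          = (1/2 : ℂ) * f u z k + (1/2 : ℂ) * (∑ i, f z (e k) i * u i)
            - (1/2 : ℂ) * (∑ a, f (e k) u a * z a) := by
      intro u z
      have h1 : (∑ i, u i * f (e i) z k) = f u z k := (hexp1 u z k).symm
      have h2 : (∑ i, (∑ a, f (e k) (e i) a * z a) * u i)
          = ∑ a, f (e k) u a * z a := by
        calc (∑ i, (∑ a, f (e k) (e i) a * z a) * u i)
            = ∑ i, ∑ a, f (e k) (e i) a * z a * u i := by
              exact Finset.sum_congr rfl fun i _ => by rw [Finset.sum_mul]
          _ = ∑ a, ∑ i, f (e k) (e i) a * z a * u i := Finset.sum_comm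
          _ = ∑ a, f (e k) u a * z a := by
              refine Finset.sum_congr rfl fun a _ => ?_
              rw [hexp2 (e k) u a, Finset.sum_mul]
              exact Finset.sum_congr rfl fun i _ => by ring
      calc (∑ i, (1/2 : ℂ) * (f (e i) z k + f z (e k) i - ∑ a, f (e k) (e i) a * z a) * u i)
          = ∑ i, ((1/2 : ℂ) * (u i * f (e i) z k) + (1/2 : ℂ) * (f z (e k) i * u i)
              - (1/2 : ℂ) * ((∑ a, f (e k) (e i) a * z a) * u i)) := by
            exact Finset.sum_congr rfl fun i _ => by ring
        _ = (1/2 : ℂ) * (∑ i, u i * f (e i) z k) + (1/2 : ℂ) * (∑ i, f z (e k) i * u i)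
              - (1/2 : ℂ) * (∑ i, (∑ a, f (e k) (e i) a * z a) * u i) := by
            rw [Finset.sum_sub_distrib, Finset.sum_add_distrib, Finset.mul_sum,
              Finset.mul_sum, Finset.mul_sum]
        _ = _ := by rw [h1, h2]
    rw [E v w, E w v, hanti w v k,
      show (∑ a, f (e k) w a * v a) = -∑ i, f w (e k) i * v i by
        rw [← Finset.sum_neg_distrib]
        exact Finset.sum_congr rfl fun a _ => by rw [hanti (e k) w a]; ring,
      show (∑ a, f (e k) v a * w a) = -∑ i, f v (e k) i * w i by
        rw [← Finset.sum_neg_distrib]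
        exact Finset.sum_congr rfl fun a _ => by rw [hanti (e k) v a]; ring]
    ring
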